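/- Let G ⊂ ℂⁿ be open and let Pₖ be polynomials converging uniformly on G in the chordal metric to f : G → ℂ ∪ {∞} with f(G) ⊂ ℂ. Then f is holomorphic on G. -/

import Mathlib

open Metric Set Filter Topology

/-- The chordal distance on the Riemann sphere `ℂ ∪ {∞} = OnePoint ℂ`. -/
noncomputable def chordal (a b : OnePoint ℂ) : ℝ :=
  Option.rec
    (Option.rec 0 (fun y => 1 / Real.sqrt (1 + ‖y‖ ^ 2)) b)
    (fun x => Option.rec (1 / Real.sqrt (1 + ‖x‖ ^ 2))
      (fun y => ‖x - y‖ /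
        (Real.sqrt (1 + ‖x‖ ^ 2) * Real.sqrt (1 + ‖y‖ ^ 2))) b) a

lemma chordal_coe (x y : ℂ) : chordal (x : OnePoint ℂ) (y : OnePoint ℂ) =
    ‖x - y‖ /
      (Real.sqrt (1 + ‖x‖ ^ 2) * Real.sqrt (1 + ‖y‖ ^ 2)) := rfl

lemma chordal_coe_comm (x y : ℂ) :
    chordal (x : OnePoint ℂ) (y : OnePoint ℂ) = chordal (y : OnePoint ℂ) (x : OnePoint ℂ) := by
  rw [chordal_coe, chordal_coe, mul_comm, norm_sub_rev]

lemma sqrt_one_add_sq_le {t : ℝ} (ht : 0 ≤ t) : Real.sqrt (1 + t ^ 2) ≤ 1 + t := by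
  rw [show (1 : ℝ) + t = Real.sqrt ((1 + t) ^ 2) by rw [Real.sqrt_sq (by linarith)]]
  exact Real.sqrt_le_sqrt (by nlinarith)

lemma one_le_sqrt_one_add_sq (t : ℝ) : 1 ≤ Real.sqrt (1 + t ^ 2) := by
  have h := Real.sq_sqrt (show (0:ℝ) ≤ 1 + t ^ 2 by positivity)
  nlinarith [Real.sqrt_nonneg (1 + t ^ 2)]

/-- From a chordal bound, a Euclidean bound with weight factors. -/
lemma chordal_lt_dist {x y : ℂ} {c : ℝ} (h : chordal (x : OnePoint ℂ) (y : OnePoint ℂ) < c) :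
    ‖x - y‖ < c * (1 + ‖x‖) * (1 + ‖y‖) := by
  rw [chordal_coe] at h
  have hx := one_le_sqrt_one_add_sq (‖x‖)
  have hy := one_le_sqrt_one_add_sq (‖y‖)
  have hx' := sqrt_one_add_sq_le (norm_nonneg x)
  have hy' := sqrt_one_add_sq_le (norm_nonneg y)
  have hpos : 0 < Real.sqrt (1 + ‖x‖ ^ 2) * Real.sqrt (1 + ‖y‖ ^ 2) := by
    nlinarith
  rw [div_lt_iff₀ hpos] at h
  have hc : 0 ≤ c := by
    have := norm_nonneg (x - y)
    nlinarith
  calc ‖x - y‖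
      < c * (Real.sqrt (1 + ‖x‖ ^ 2) * Real.sqrt (1 + ‖y‖ ^ 2)) := h
    _ ≤ c * ((1 + ‖x‖) * (1 + ‖y‖)) := by
        apply mul_le_mul_of_nonneg_left _ hc
        have hy0 := norm_nonneg y
        nlinarith
    _ = c * (1 + ‖x‖) * (1 + ‖y‖) := by ring

/-- If `x` is chordally close to `y` and the closeness is small relative to `y`,
then `x` is bounded in terms of `y`. -/
lemma chordal_lt_bound {x y : ℂ} {c : ℝ} (h : chordal (x : OnePoint ℂ) (y : OnePoint ℂ) < c)
    (hc : c * (1 + ‖y‖) ≤ 1 / 2) :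
    ‖x‖ ≤ 2 * ‖y‖ + 1 := by
  have h1 := chordal_lt_dist h
  have h2 : ‖x‖ ≤ ‖y‖ + ‖x - y‖ := by
    calc ‖x‖ = ‖y + (x - y)‖ := by ring_nf
      _ ≤ ‖y‖ + ‖x - y‖ := norm_add_le _ _
  have hx0 := norm_nonneg x
  nlinarith

/-- Cauchy-type estimate: a holomorphic function small on a ball has small derivative
on the half ball. -/
lemma fderiv_bound_of_small {E : Type*} [NormedAddCommGroup E] [NormedSpace ℂ E]
    {h : E → ℂ} (hd : Differentiable ℂ h) {z₀ z : E} {r M : ℝ} (hr : 0 < r)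
    (hz : z ∈ ball z₀ r) (hM : ∀ w ∈ ball z₀ (2 * r), ‖h w‖ < M) :
    ‖fderiv ℂ h z‖ ≤ 2 * M / r := by
  have hzin : z ∈ ball z₀ (2 * r) := by
    rw [mem_ball] at hz ⊢; linarith
  have hM0 : 0 ≤ M := le_of_lt (lt_of_le_of_lt (norm_nonneg _) (hM z hzin))
  refine ContinuousLinearMap.opNorm_le_bound _ (by positivity) ?_
  intro v
  rcases eq_or_ne v 0 with rfl | hv
  · simp
  set u : E := ((‖v‖ : ℂ))⁻¹ • v with hu_def
  have hvnorm : (0:ℝ) < ‖v‖ := norm_pos_iff.mpr hv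
  have hu : ‖u‖ = 1 := by
    rw [hu_def, norm_smul]
    simp [hvnorm.ne']
  set g : ℂ → ℂ := fun w => h (z + w • u) with hg_def
  have hin : ∀ w ∈ ball (0:ℂ) r, z + w • u ∈ ball z₀ (2 * r) := by
    intro w hw
    rw [mem_ball] at hw hz ⊢
    calc dist (z + w • u) z₀ ≤ dist (z + w • u) z + dist z z₀ := dist_triangle _ _ _
      _ < r + r := by
          apply add_lt_add_of_le_of_lt _ hz
          rw [dist_eq_norm]
          simp only [add_sub_cancel_left, norm_smul, hu, mul_one]
          simpa using le_of_lt hw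
      _ = 2 * r := by ring
  have hgd : Differentiable ℂ g := by
    apply hd.comp
    exact (differentiable_id.smul_const u).const_add z
  have hmaps : Set.MapsTo g (ball (0:ℂ) r) (ball (g 0) (2 * M)) := by
    intro w hw
    have h1 := hM _ (hin w hw)
    have h2 := hM _ (hin 0 (mem_ball_self hr))
    rw [mem_ball, Complex.dist_eq]
    calc ‖g w - g 0‖ ≤ ‖g w‖ + ‖g 0‖ := by
          simpa using norm_sub_le (g w) (g 0)
      _ < 2 * M := by rw [hg_def]; simp only []; linarith
  have hder := Complex.norm_deriv_le_div_of_mapsTo_ball hgd.differentiableOn (hmaps.mono_right ball_subset_closedBall) hr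
  have hgderiv : HasDerivAt g (fderiv ℂ h z u) 0 := by
    have h1 : HasDerivAt (fun w : ℂ => z + w • u) u 0 := by
      simpa using ((hasDerivAt_id (0:ℂ)).smul_const u).const_add z
    have h2 : HasFDerivAt h (fderiv ℂ h z) (z + (0:ℂ) • u) := by
      simpa using (hd (z + (0:ℂ) • u)).hasFDerivAt
    exact h2.comp_hasDerivAt 0 h1
  have hTu : ‖fderiv ℂ h z u‖ ≤ 2 * M / r := by
    rw [← hgderiv.deriv]; exact hder
  have hvu : (‖v‖ : ℂ) • u = v := by
    rw [hu_def, smul_smul]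
    rw [mul_inv_cancel₀ (by exact_mod_cast hvnorm.ne'), one_smul]
  calc ‖fderiv ℂ h z v‖ = ‖fderiv ℂ h z ((‖v‖ : ℂ) • u)‖ := by rw [hvu]
    _ = ‖v‖ * ‖fderiv ℂ h z u‖ := by rw [map_smul, norm_smul]; simp
    _ ≤ ‖v‖ * (2 * M / r) := by
        exact mul_le_mul_of_nonneg_left hTu (norm_nonneg v)
    _ = 2 * M / r * ‖v‖ := mul_comm _ _

/-- If `G ⊂ ℂⁿ` is open and polynomials `Pₖ` converge uniformly on `G` in the chordal metric
to a finite-valued function `f : G → ℂ`, then `f` is holomorphic on `G`. -/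
theorem stmt16 (n : ℕ) (G : Set (Fin n → ℂ)) (hGo : IsOpen G)
    (P : ℕ → MvPolynomial (Fin n) ℂ) (f : (Fin n → ℂ) → ℂ)
    (hconv : ∀ ε > 0, ∃ K : ℕ, ∀ k ≥ K, ∀ z ∈ G,
      chordal ((MvPolynomial.eval z (P k) : ℂ) : OnePoint ℂ) ((f z : ℂ) : OnePoint ℂ) < ε) :
    DifferentiableOn ℂ f G := by
  have hQd : ∀ k, Differentiable ℂ (fun z => MvPolynomial.eval z (P k)) := fun k z =>
    ((AnalyticOnNhd.eval_mvPolynomial (P k)) z (Set.mem_univ z)).differentiableAt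
  intro z₀ hz₀
  set Q : ℕ → (Fin n → ℂ) → ℂ := fun k z => MvPolynomial.eval z (P k) with hQdef
  have ha : 0 ≤ ‖f z₀‖ := norm_nonneg _
  set a := ‖f z₀‖ with hadef
  have hc₀pos : 0 < 1 / (2 * (1 + a)) := by positivity
  obtain ⟨K₀, hK₀⟩ := hconv _ hc₀pos
  set A : ℝ := 2 * a + 1 with hAdef
  have hA0 : 0 ≤ A := by rw [hAdef]; linarith
  have hQz₀ : ∀ k ≥ K₀, ‖Q k z₀‖ ≤ A := by
    intro k hk
    refine chordal_lt_bound (hK₀ k hk z₀ hz₀) ?_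
    rw [← hadef, div_mul_eq_mul_div, one_mul,
      div_le_div_iff₀ (by positivity) (by norm_num)]
    linarith
  set ε₁ : ℝ := min (1 / (2 * (1 + a))) (1 / (2 * (2 + A))) with hε₁def
  have hε₁pos : 0 < ε₁ := lt_min hc₀pos (by positivity)
  obtain ⟨K₁', hK₁'⟩ := hconv ε₁ hε₁pos
  set k₁ := max K₀ K₁' with hk₁def
  have hcont : ContinuousAt (Q k₁) z₀ := (hQd k₁).continuous.continuousAt
  obtain ⟨δ₁, hδ₁pos, hδ₁⟩ := Metric.continuousAt_iff.mp hcont 1 one_pos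
  obtain ⟨δ₂, hδ₂pos, hδ₂⟩ := Metric.isOpen_iff.mp hGo z₀ hz₀
  set r : ℝ := min δ₁ δ₂ / 4 with hrdef
  have hrpos : 0 < r := by positivity
  have hsubG : ball z₀ (2 * r) ⊆ G := by
    intro z hz
    apply hδ₂
    rw [mem_ball] at hz ⊢
    have h1 := min_le_right δ₁ δ₂
    rw [hrdef] at hz
    linarith
  have hQk₁bd : ∀ z ∈ ball z₀ (2 * r), ‖Q k₁ z‖ ≤ A + 1 := by
    intro z hz
    have hd1 : dist z z₀ < δ₁ := by
      rw [mem_ball, hrdef] at hz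
      have := min_le_left δ₁ δ₂
      linarith
    have h2 := hδ₁ hd1
    rw [Complex.dist_eq] at h2
    have h3 : ‖Q k₁ z₀‖ ≤ A := hQz₀ k₁ (le_max_left _ _)
    calc ‖Q k₁ z‖ = ‖Q k₁ z₀ + (Q k₁ z - Q k₁ z₀)‖ := by ring_nf
      _ ≤ ‖Q k₁ z₀‖ + ‖Q k₁ z - Q k₁ z₀‖ := norm_add_le _ _
      _ ≤ A + 1 := by linarith
  set B : ℝ := 2 * (A + 1) + 1 with hBdef
  have hB0 : 0 ≤ B := by rw [hBdef]; linarith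
  have hfbd : ∀ z ∈ ball z₀ (2 * r), ‖f z‖ ≤ B := by
    intro z hz
    have h1 : chordal ((f z : ℂ) : OnePoint ℂ) ((Q k₁ z : ℂ) : OnePoint ℂ) < ε₁ := by
      rw [chordal_coe_comm]
      exact hK₁' k₁ (le_max_right _ _) z (hsubG hz)
    have h4 : ‖f z‖ ≤ 2 * ‖Q k₁ z‖ + 1 := by
      refine chordal_lt_bound h1 ?_
      have h2 := hQk₁bd z hz
      have h3 : ε₁ ≤ 1 / (2 * (2 + A)) := min_le_right _ _
      calc ε₁ * (1 + ‖Q k₁ z‖)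
          ≤ (1 / (2 * (2 + A))) * (2 + A) :=
            mul_le_mul h3 (by linarith) (by positivity) (by positivity)
        _ = 1 / 2 := by field_simp
    have h2 := hQk₁bd z hz
    rw [hBdef]; linarith
  set ε₂ : ℝ := min ε₁ (1 / (2 * (1 + B))) with hε₂def
  have hε₂pos : 0 < ε₂ := lt_min hε₁pos (by positivity)
  obtain ⟨K₂', hK₂'⟩ := hconv ε₂ hε₂pos
  set C : ℝ := 2 * B + 1 with hCdef
  have hC0 : 0 ≤ C := by rw [hCdef]; linarith
  have hQbd : ∀ k ≥ K₂', ∀ z ∈ ball z₀ (2 * r), ‖Q k z‖ ≤ C := by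
    intro k hk z hz
    have h4 : ‖Q k z‖ ≤ 2 * ‖f z‖ + 1 := by
      refine chordal_lt_bound (hK₂' k hk z (hsubG hz)) ?_
      have h2 := hfbd z hz
      have h3 : ε₂ ≤ 1 / (2 * (1 + B)) := min_le_right _ _
      calc ε₂ * (1 + ‖f z‖)
          ≤ (1 / (2 * (1 + B))) * (1 + B) :=
            mul_le_mul h3 (by linarith) (by positivity) (by positivity)
        _ = 1 / 2 := by field_simp
    have h2 := hfbd z hz
    rw [hCdef]; linarith
  -- uniform convergence of the values in the Euclidean metric
  have huc : TendstoUniformlyOn Q f atTop (ball z₀ (2 * r)) := by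
    rw [Metric.tendstoUniformlyOn_iff]
    intro ε hε
    have hDpos : (0 : ℝ) < (1 + C) * (1 + B) := by positivity
    have hδpos : 0 < min ε₂ (ε / ((1 + C) * (1 + B))) := lt_min hε₂pos (by positivity)
    obtain ⟨K₃', hK₃'⟩ := hconv _ hδpos
    rw [eventually_atTop]
    refine ⟨max K₂' K₃', fun k hk z hz => ?_⟩
    have h1 := hK₃' k (le_of_max_le_right hk) z (hsubG hz)
    have h2 := chordal_lt_dist h1
    have hQC := hQbd k (le_of_max_le_left hk) z hz
    have hfB := hfbd z hz
    have h3 : min ε₂ (ε / ((1 + C) * (1 + B))) * (1 + ‖Q k z‖) *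
        (1 + ‖f z‖) ≤ ε := by
      have h4 : min ε₂ (ε / ((1 + C) * (1 + B))) ≤ ε / ((1 + C) * (1 + B)) :=
        min_le_right _ _
      calc min ε₂ (ε / ((1 + C) * (1 + B))) * (1 + ‖Q k z‖) *
            (1 + ‖f z‖)
          ≤ (ε / ((1 + C) * (1 + B))) * (1 + C) * (1 + B) := by
            apply mul_le_mul _ (by linarith) (by positivity) (by positivity)
            apply mul_le_mul h4 (by linarith) (by positivity) (by positivity)
        _ = ε := by field_simp
    rw [Complex.dist_eq, norm_sub_rev]
    exact lt_of_lt_of_le h2 h3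
  -- uniform Cauchy property of the derivatives on the half ball
  have hdc : UniformCauchySeqOn (fun k z => fderiv ℂ (Q k) z) atTop (ball z₀ r) := by
    rw [Metric.uniformCauchySeqOn_iff]
    intro ε hε
    obtain ⟨N, hN⟩ := Metric.uniformCauchySeqOn_iff.mp huc.uniformCauchySeqOn
      (r * ε / 4) (by positivity)
    refine ⟨N, fun k hk m hm z hz => ?_⟩
    have hdiff : Differentiable ℂ (fun w => Q k w - Q m w) := (hQd k).sub (hQd m)
    have hsmall : ∀ w ∈ ball z₀ (2 * r),
        ‖(fun w => Q k w - Q m w) w‖ < r * ε / 4 := by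
      intro w hw
      have := hN k hk m hm w hw
      rwa [Complex.dist_eq] at this
    have hb := fderiv_bound_of_small hdiff hrpos hz hsmall
    rw [dist_eq_norm]
    have heq : fderiv ℂ (Q k) z - fderiv ℂ (Q m) z = fderiv ℂ (fun w => Q k w - Q m w) z :=
      (fderiv_sub ((hQd k) z) ((hQd m) z)).symm
    rw [heq]
    calc ‖fderiv ℂ (fun w => Q k w - Q m w) z‖ ≤ 2 * (r * ε / 4) / r := hb
      _ = ε / 2 := by field_simp; ring
      _ < ε := by linarith
  -- pointwise limits of the derivatives
  have hex : ∀ z, ∃ L : (Fin n → ℂ) →L[ℂ] ℂ, z ∈ ball z₀ r →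
      Tendsto (fun k => fderiv ℂ (Q k) z) atTop (𝓝 L) := by
    intro z
    by_cases hz : z ∈ ball z₀ r
    · obtain ⟨L, hL⟩ := cauchySeq_tendsto_of_complete (hdc.cauchySeq hz)
      exact ⟨L, fun _ => hL⟩
    · exact ⟨0, fun h => absurd h hz⟩
  choose g' hg' using hex
  have hdu : TendstoUniformlyOn (fun k z => fderiv ℂ (Q k) z) g' atTop (ball z₀ r) :=
    hdc.tendstoUniformlyOn_of_tendsto (fun z hz => hg' z hz)
  have hball : ball z₀ r ⊆ ball z₀ (2 * r) := ball_subset_ball (by linarith)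
  have hmain := hasFDerivAt_of_tendstoUniformlyOn isOpen_ball hdu
    (fun k z _ => ((hQd k) z).hasFDerivAt)
    (fun z hz => huc.tendsto_at (hball hz))
    (mem_ball_self hrpos)
  exact hmain.differentiableAt.differentiableWithinAt
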